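/- Let n ∈ ℕ and let X be an n-dimensional Alexandrov space of curvature ≥ 0. Let f : X → ℝ be a Lipschitz affine function with optimal Lipschitz constant L satisfying 0 < L < ∞, and suppose there is an isometric embedding γ : ℝ → X (a line) such that f(γ(t)) = f(γ(0)) + L·t for all t ∈ ℝ. Then there exist a metric space Z and a surjective isometry Φ : X → Z ×₂ ℝ such that, writing Φ(x) = (z(x), t(x)), one has f(x) = L·t(x) for all x ∈ X. -/

import Mathlib

open Metric MeasureTheory Set

noncomputable section

/-- The comparison angle `∠̃_κ(q; x, y)`: the angle at the vertex corresponding to `q` of a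
geodesic triangle in the simply connected model surface of constant curvature `κ` whose side
lengths are `d(q,x)`, `d(q,y)`, `d(x,y)`, computed by the law of cosines in each model. -/
def cmpAngle (κ : ℝ) {X : Type*} [MetricSpace X] (q x y : X) : ℝ :=
  if κ = 0 then
    Real.arccos ((dist q x ^ 2 + dist q y ^ 2 - dist x y ^ 2) / (2 * dist q x * dist q y))
  else if 0 < κ then
    Real.arccos ((Real.cos (Real.sqrt κ * dist x y) -
        Real.cos (Real.sqrt κ * dist q x) * Real.cos (Real.sqrt κ * dist q y)) /
      (Real.sin (Real.sqrt κ * dist q x) * Real.sin (Real.sqrt κ * dist q y)))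
  else
    Real.arccos ((Real.cosh (Real.sqrt (-κ) * dist q x) * Real.cosh (Real.sqrt (-κ) * dist q y) -
        Real.cosh (Real.sqrt (-κ) * dist x y)) /
      (Real.sinh (Real.sqrt (-κ) * dist q x) * Real.sinh (Real.sqrt (-κ) * dist q y)))

/-- A constant-speed geodesic parametrized by `[0,1]`. -/
def IsGeodesicSeg {X : Type*} [MetricSpace X] (γ : ℝ → X) : Prop :=
  ∀ s ∈ Set.Icc (0:ℝ) 1, ∀ t ∈ Set.Icc (0:ℝ) 1,
    dist (γ s) (γ t) = |s - t| * dist (γ 0) (γ 1)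

/-- A metric space is geodesic if any two points are joined by a constant-speed geodesic. -/
def GeodesicSpace (X : Type*) [MetricSpace X] : Prop :=
  ∀ x y : X, ∃ γ : ℝ → X, IsGeodesicSeg γ ∧ γ 0 = x ∧ γ 1 = y

/-- `X` has curvature `≥ κ`: the quadruple comparison condition. -/
def CurvGE (κ : ℝ) (X : Type*) [MetricSpace X] : Prop :=
  ∀ q x y z : X, q ≠ x → q ≠ y → q ≠ z → x ≠ y → x ≠ z → y ≠ z →
    cmpAngle κ q x y + cmpAngle κ q y z + cmpAngle κ q z x ≤ 2 * Real.pi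

/-- An `n`-dimensional Alexandrov space of curvature `≥ κ`: a complete, proper, geodesic
metric space of Hausdorff dimension `n` that has curvature `≥ κ`. -/
def IsAlexandrov (n : ℕ) (κ : ℝ) (X : Type*) [MetricSpace X] : Prop :=
  CompleteSpace X ∧ ProperSpace X ∧ GeodesicSpace X ∧
    dimH (Set.univ : Set X) = n ∧ CurvGE κ X

/-- A map into a real vector space is affine if it is affine along every constant-speed
geodesic. -/
def AffineOn {X : Type*} [MetricSpace X] {V : Type*} [AddCommGroup V] [Module ℝ V]
    (F : X → V) : Prop :=
  ∀ γ : ℝ → X, IsGeodesicSeg γ → ∀ t ∈ Set.Icc (0:ℝ) 1,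
    F (γ t) = (1 - t) • F (γ 0) + t • F (γ 1)

/-- A real-valued function is Lipschitz. -/
def IsLip {X : Type*} [MetricSpace X] (f : X → ℝ) : Prop :=
  ∃ L : ℝ, 0 ≤ L ∧ ∀ x y, |f x - f y| ≤ L * dist x y

/-- The optimal Lipschitz constant of a real-valued function. -/
def lipConst {X : Type*} [MetricSpace X] (f : X → ℝ) : ℝ :=
  sInf {L : ℝ | 0 ≤ L ∧ ∀ x y, |f x - f y| ≤ L * dist x y}



/-- Rigidity: a nonnegative midpoint-concave function on ℝ is constant. -/
private lemma const_of_midpoint_concave (G : ℝ → ℝ)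
    (h1 : ∀ s a : ℝ, G (s + a) + G (s - a) ≤ 2 * G s)
    (h0 : ∀ s : ℝ, 0 ≤ G s) : ∀ s t : ℝ, G s = G t := by
  have main : ∀ s a : ℝ, G (s + a) ≤ G s := by
    intro s a
    by_contra hlt
    push_neg at hlt
    set δ := G (s + a) - G s with hδ
    have hδpos : 0 < δ := by simp [hδ]; linarith
    set w : ℕ → ℝ := fun k => G (s + a - (k : ℝ) * a) with hw
    have step : ∀ k : ℕ, δ ≤ w k - w (k + 1) := by
      intro k
      induction k with
      | zero =>
        have e0 : s + a - (0 : ℝ) * a = s + a := by ring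
        have e1 : s + a - ((0 : ℕ) + 1 : ℕ) * a = s := by push_cast; ring
        simp only [hw]
        rw [show ((0:ℕ):ℝ) = (0:ℝ) by norm_num, e0]
        rw [show (((0:ℕ)+1:ℕ):ℝ) = (1:ℝ) by norm_num]
        have : s + a - (1:ℝ) * a = s := by ring
        rw [this]
      | succ k ih =>
        have hmid := h1 (s + a - ((k : ℝ) + 1) * a) a
        have e1 : s + a - ((k : ℝ) + 1) * a + a = s + a - (k : ℝ) * a := by ring
        have e2 : s + a - ((k : ℝ) + 1) * a - a = s + a - ((k : ℝ) + 2) * a := by ring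
        rw [e1, e2] at hmid
        simp only [hw] at ih ⊢
        push_cast
        push_cast at ih
        rw [show ((k:ℝ)+1+1) = (k:ℝ)+2 from by ring]
        linarith
    have tele : ∀ k : ℕ, w (k + 1) ≤ w 0 - ((k : ℝ) + 1) * δ := by
      intro k
      induction k with
      | zero =>
        have := step 0
        push_cast
        linarith
      | succ k ih =>
        have := step (k + 1)
        push_cast
        push_cast at ih
        linarith
    obtain ⟨k, hk⟩ := exists_nat_gt (w 0 / δ)
    have h2 := tele k
    have h3 := h0 (s + a - ((k + 1 : ℕ) : ℝ) * a)
    have h4 : 0 ≤ w (k + 1) := by simpa [hw] using h3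
    have h5 : w 0 / δ < (k : ℝ) + 1 := by push_cast at hk ⊢; linarith
    rw [div_lt_iff₀ hδpos] at h5
    linarith
  intro s t
  have h1' := main t (s - t)
  have h2' := main s (t - s)
  rw [show t + (s - t) = s from by ring] at h1'
  rw [show s + (t - s) = t from by ring] at h2'
  linarith

/-- ratio bounds -/
private lemma ratio_bounds {X : Type*} [MetricSpace X] (q u v : X)
    (h1 : 0 < dist q u) (h2 : 0 < dist q v) :
    -1 ≤ (dist q u ^ 2 + dist q v ^ 2 - dist u v ^ 2) / (2 * dist q u * dist q v) ∧
      (dist q u ^ 2 + dist q v ^ 2 - dist u v ^ 2) / (2 * dist q u * dist q v) ≤ 1 := by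
  have t1 : dist u v ≤ dist u q + dist q v := dist_triangle u q v
  have t2 : dist q u ≤ dist q v + dist v u := dist_triangle q v u
  have t3 : dist q v ≤ dist q u + dist u v := dist_triangle q u v
  have huv : 0 ≤ dist u v := dist_nonneg
  rw [dist_comm u q] at t1
  rw [dist_comm v u] at t2
  constructor
  · rw [le_div_iff₀ (by positivity)]
    nlinarith
  · rw [div_le_one (by positivity)]
    nlinarith

/-- The curvature ≥ 0 quadruple condition implies the midpoint comparison inequality. -/
private lemma cmp_midpoint {X : Type*} [MetricSpace X] (hcurv : CurvGE 0 X)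
    (q x y z : X) (a : ℝ) (ha : 0 < a)
    (hqx : dist q x = a) (hqy : dist q y = a) (hxy : dist x y = 2 * a) :
    dist z y ^ 2 + dist z x ^ 2 ≤ 2 * dist z q ^ 2 + 2 * a ^ 2 := by
  by_cases hzq : z = q
  · rw [hzq, dist_self, hqy, hqx]
    nlinarith
  by_cases hzx : z = x
  · rw [hzx, hxy, dist_self, dist_comm x q, hqx]
    nlinarith
  by_cases hzy : z = y
  · rw [hzy, dist_self, dist_comm y x, hxy, dist_comm y q, hqy]
    nlinarith
  -- nondegenerate case
  have hqx' : q ≠ x := by rw [← dist_pos, hqx]; exact ha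
  have hqy' : q ≠ y := by rw [← dist_pos, hqy]; exact ha
  have hxy' : x ≠ y := by rw [← dist_pos, hxy]; linarith
  have H := hcurv q x y z hqx' hqy' (fun h => hzq h.symm) hxy' (fun h => hzx h.symm)
    (fun h => hzy h.symm)
  have hred : ∀ p u v : X, cmpAngle 0 p u v = Real.arccos
      ((dist p u ^ 2 + dist p v ^ 2 - dist u v ^ 2) / (2 * dist p u * dist p v)) :=
    fun _ _ _ => if_pos rfl
  rw [hred, hred, hred] at H
  have hfirst : (dist q x ^ 2 + dist q y ^ 2 - dist x y ^ 2) / (2 * dist q x * dist q y) = -1 := by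
    rw [hqx, hqy, hxy]
    field_simp
    ring
  rw [hfirst, Real.arccos_neg_one] at H
  have hqz : 0 < dist q z := dist_pos.2 (fun h => hzq h.symm)
  have hqy0 : 0 < dist q y := by rw [hqy]; exact ha
  have hqx0 : 0 < dist q x := by rw [hqx]; exact ha
  have hA := ratio_bounds q y z hqy0 hqz
  have hB := ratio_bounds q z x hqz hqx0
  set A := (dist q y ^ 2 + dist q z ^ 2 - dist y z ^ 2) / (2 * dist q y * dist q z) with hAdef
  set B := (dist q z ^ 2 + dist q x ^ 2 - dist z x ^ 2) / (2 * dist q z * dist q x) with hBdef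
  have hsum : Real.arccos A + Real.arccos B ≤ Real.pi := by linarith
  clear H hred
  have h1 : Real.arccos A ≤ Real.pi - Real.arccos B := by linarith
  have h2 : Real.cos (Real.pi - Real.arccos B) ≤ Real.cos (Real.arccos A) :=
    Real.cos_le_cos_of_nonneg_of_le_pi (Real.arccos_nonneg A)
      (by linarith [Real.arccos_nonneg B]) h1
  rw [Real.cos_pi_sub, Real.cos_arccos hA.1 hA.2, Real.cos_arccos hB.1 hB.2] at h2
  -- h2 : -B ≤ A
  have hApos : A * (2 * dist q y * dist q z) = dist q y ^ 2 + dist q z ^ 2 - dist y z ^ 2 := by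
    rw [hAdef]; exact div_mul_cancel₀ _ (by positivity)
  have hBpos : B * (2 * dist q z * dist q x) = dist q z ^ 2 + dist q x ^ 2 - dist z x ^ 2 := by
    rw [hBdef]; exact div_mul_cancel₀ _ (by positivity)
  rw [hqx] at hBpos
  rw [hqy] at hApos
  have h3 : 0 ≤ A + B := by linarith
  have h4 : 0 ≤ (A + B) * (2 * a * dist q z) := by positivity
  have h5 : (A + B) * (2 * a * dist q z) =
      (a ^ 2 + dist q z ^ 2 - dist y z ^ 2) + (dist q z ^ 2 + a ^ 2 - dist z x ^ 2) := by
    have e1 : A * (2 * a * dist q z) = a ^ 2 + dist q z ^ 2 - dist y z ^ 2 := hApos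
    have e2 : B * (2 * a * dist q z) = dist q z ^ 2 + a ^ 2 - dist z x ^ 2 := by
      rw [← hBpos]; ring
    calc (A + B) * (2 * a * dist q z) = A * (2 * a * dist q z) + B * (2 * a * dist q z) := by
          ring
      _ = _ := by rw [e1, e2]
  rw [dist_comm z y, dist_comm z q]
  nlinarith [h4, h5]

/-- Ray construction: through each point a ray asymptotic to the given "line" δ. -/
private lemma exists_ray {X : Type*} [MetricSpace X] [ProperSpace X]
    (hgeo : GeodesicSpace X)
    (h : X → ℝ) (hlip : ∀ a b : X, |h a - h b| ≤ dist a b) (haff : AffineOn h)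
    (δ : ℝ → X) (hδd : ∀ s t : ℝ, dist (δ s) (δ t) = |s - t|) (hhδ : ∀ t : ℝ, h (δ t) = t)
    (x : X) :
    ∃ ρ : ℝ → X, ρ (h x) = x ∧
      (∀ u v : ℝ, h x ≤ u → h x ≤ v → dist (ρ u) (ρ v) = |u - v|) ∧
      (∀ u : ℝ, h x ≤ u → h (ρ u) = u) := by
  classical
  set c := dist x (δ (h x)) with hc
  have hc0 : 0 ≤ c := dist_nonneg
  choose σ hσg hσ0 hσ1 using fun n : ℕ => hgeo x (δ (h x + ((n : ℝ) + 1)))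
  set D : ℕ → ℝ := fun n => dist x (δ (h x + ((n : ℝ) + 1))) with hD
  have hn1 : ∀ n : ℕ, (0:ℝ) < (n : ℝ) + 1 := fun n => by positivity
  have hD_lb : ∀ n : ℕ, (n : ℝ) + 1 ≤ D n := by
    intro n
    have := hlip x (δ (h x + ((n : ℝ) + 1)))
    rw [hhδ] at this
    have e : |h x - (h x + ((n:ℝ) + 1))| = (n:ℝ) + 1 := by
      rw [show h x - (h x + ((n:ℝ)+1)) = -(((n:ℝ)+1)) from by ring, abs_neg,
        abs_of_pos (hn1 n)]
    rw [e] at this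
    exact this
  have hD_ub : ∀ n : ℕ, D n ≤ c + ((n : ℝ) + 1) := by
    intro n
    calc D n ≤ dist x (δ (h x)) + dist (δ (h x)) (δ (h x + ((n:ℝ)+1))) := dist_triangle _ _ _
      _ = c + ((n:ℝ)+1) := by
          rw [hδd, ← hc]
          congr 1
          rw [show h x - (h x + ((n:ℝ)+1)) = -(((n:ℝ)+1)) from by ring, abs_neg,
            abs_of_pos (hn1 n)]
  set sp : ℕ → ℝ → ℝ := fun n u => min ((u - h x) / ((n:ℝ) + 1)) 1 with hsp
  set q : ℕ → ℝ → X := fun n u => σ n (sp n u) with hq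
  have hsp_mem : ∀ (n : ℕ) (u : ℝ), h x ≤ u → sp n u ∈ Set.Icc (0:ℝ) 1 := by
    intro n u hu
    have h0 : 0 ≤ (u - h x) / ((n:ℝ)+1) := div_nonneg (by linarith) (le_of_lt (hn1 n))
    exact ⟨le_min h0 zero_le_one, min_le_right _ _⟩
  have hqdist : ∀ (n : ℕ) (u v : ℝ), h x ≤ u → h x ≤ v →
      dist (q n u) (q n v) = |sp n u - sp n v| * D n := by
    intro n u v hu hv
    have := hσg n (sp n u) (hsp_mem n u hu) (sp n v) (hsp_mem n v hv)
    rw [hσ0, hσ1] at this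
    exact this
  have hqx : ∀ (n : ℕ) (u : ℝ), h x ≤ u → dist x (q n u) = sp n u * D n := by
    intro n u hu
    have h0 := hσg n 0 (by constructor <;> norm_num) (sp n u) (hsp_mem n u hu)
    rw [hσ0, hσ1] at h0
    have e : |(0:ℝ) - sp n u| = sp n u := by
      rw [zero_sub, abs_neg, abs_of_nonneg (hsp_mem n u hu).1]
    rw [e] at h0
    simpa only [hq, hD] using h0
  have hqball : ∀ (n : ℕ) (u : ℝ), h x ≤ u → q n u ∈ closedBall x (u - h x + c) := by
    intro n u hu
    rw [mem_closedBall, dist_comm, hqx n u hu]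
    have h1 : sp n u ≤ (u - h x) / ((n:ℝ)+1) := min_le_left _ _
    have h2 : sp n u ≤ 1 := min_le_right _ _
    have h3 : 0 ≤ sp n u := (hsp_mem n u hu).1
    calc sp n u * D n ≤ sp n u * (c + ((n:ℝ)+1)) :=
          mul_le_mul_of_nonneg_left (hD_ub n) h3
      _ = sp n u * ((n:ℝ)+1) + sp n u * c := by ring
      _ ≤ (u - h x) + 1 * c := by
          gcongr
          · rw [← le_div_iff₀ (hn1 n)]; exact h1
      _ = u - h x + c := by ring
  -- the ultrafilter
  obtain ⟨U, hU⟩ := Ultrafilter.exists_le (Filter.atTop : Filter ℕ)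
  have key : ∀ u : ℝ, h x ≤ u → ∃ y : X, Filter.Tendsto (fun n => q n u) ↑U (nhds y) := by
    intro u hu
    have hmap : Filter.Tendsto (fun n => q n u) ↑U
        (Filter.principal (closedBall x (u - h x + c))) := by
      rw [Filter.tendsto_principal]
      exact Filter.Eventually.of_forall (fun n => hqball n u hu)
    obtain ⟨y, -, hy⟩ := (isCompact_closedBall x (u - h x + c)).ultrafilter_le_nhds
      (U.map fun n => q n u) (by rwa [Ultrafilter.coe_map])
    refine ⟨y, ?_⟩
    rwa [Ultrafilter.coe_map] at hy
  set ρ : ℝ → X := fun u => if hu : h x ≤ u then Classical.choose (key u hu) else x with hρ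
  have hρt : ∀ (u : ℝ) (hu : h x ≤ u), Filter.Tendsto (fun n => q n u) ↑U (nhds (ρ u)) := by
    intro u hu
    simp only [hρ, dif_pos hu]
    exact Classical.choose_spec (key u hu)
  -- the speeds converge
  have hsp_ev : ∀ u : ℝ, h x ≤ u → ∀ᶠ n : ℕ in Filter.atTop, sp n u = (u - h x) / ((n:ℝ)+1) := by
    intro u hu
    obtain ⟨N, hN⟩ := exists_nat_ge (u - h x)
    refine Filter.eventually_atTop.2 ⟨N, fun n hn => ?_⟩
    have : (u - h x) / ((n:ℝ)+1) ≤ 1 := by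
      rw [div_le_one (hn1 n)]
      have : (N:ℝ) ≤ (n:ℝ) := by exact_mod_cast hn
      linarith
    exact min_eq_left this
  have hdist_lim : ∀ u v : ℝ, h x ≤ u → h x ≤ v →
      Filter.Tendsto (fun n => dist (q n u) (q n v)) Filter.atTop (nhds |u - v|) := by
    intro u v hu hv
    have hev : ∀ᶠ n : ℕ in Filter.atTop,
        dist (q n u) (q n v) = |u - v| / ((n:ℝ)+1) * D n := by
      filter_upwards [hsp_ev u hu, hsp_ev v hv] with n e1 e2
      rw [hqdist n u v hu hv, e1, e2, div_sub_div_same,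
        show u - h x - (v - h x) = u - v from by ring, abs_div,
        abs_of_pos (hn1 n)]
    have hlim : Filter.Tendsto (fun n : ℕ => |u - v| / ((n:ℝ)+1) * D n)
        Filter.atTop (nhds |u - v|) := by
      have hts : Filter.Tendsto (fun n : ℕ => ((n:ℝ)+1)) Filter.atTop Filter.atTop :=
        Filter.tendsto_atTop_add_const_right _ 1 tendsto_natCast_atTop_atTop
      have h0 : Filter.Tendsto (fun n : ℕ => |u - v| * c / ((n:ℝ)+1))
          Filter.atTop (nhds 0) := Filter.Tendsto.div_atTop tendsto_const_nhds hts
      have hup : Filter.Tendsto (fun n : ℕ => |u - v| + |u - v| * c / ((n:ℝ)+1))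
          Filter.atTop (nhds (|u - v| + 0)) := tendsto_const_nhds.add h0
      rw [add_zero] at hup
      refine tendsto_of_tendsto_of_tendsto_of_le_of_le tendsto_const_nhds hup ?_ ?_
      · intro n
        have := hD_lb n
        have h1 : |u - v| / ((n:ℝ)+1) * ((n:ℝ)+1) ≤ |u - v| / ((n:ℝ)+1) * D n := by
          gcongr
        rw [div_mul_cancel₀ _ (ne_of_gt (hn1 n))] at h1
        exact h1
      · intro n
        have := hD_ub n
        have h1 : |u - v| / ((n:ℝ)+1) * D n ≤ |u - v| / ((n:ℝ)+1) * (c + ((n:ℝ)+1)) := by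
          gcongr
        calc |u - v| / ((n:ℝ)+1) * D n ≤ |u - v| / ((n:ℝ)+1) * (c + ((n:ℝ)+1)) := h1
          _ = |u - v| + |u - v| * c / ((n:ℝ)+1) := by
              field_simp
              ring
    exact hlim.congr' (by filter_upwards [hev] with n e; rw [e])
  refine ⟨ρ, ?_, ?_, ?_⟩
  · -- ρ (h x) = x
    have h1 : Filter.Tendsto (fun n => q n (h x)) ↑U (nhds x) := by
      have : ∀ n : ℕ, q n (h x) = x := by
        intro n
        simp only [hq, hsp]
        rw [show (h x - h x) / ((n:ℝ)+1) = 0 from by rw [sub_self]; ring,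
          min_eq_left zero_le_one, hσ0]
      exact Filter.Tendsto.congr (fun n => (this n).symm) tendsto_const_nhds
    exact tendsto_nhds_unique (hρt (h x) le_rfl) h1
  · intro u v hu hv
    exact tendsto_nhds_unique ((hρt u hu).dist (hρt v hv))
      ((hdist_lim u v hu hv).mono_left hU)
  · intro u hu
    have hcont : Continuous h := by
      have : LipschitzWith 1 h := by
        apply LipschitzWith.of_dist_le_mul
        intro a b
        rw [Real.dist_eq, NNReal.coe_one, one_mul]
        exact hlip a b
      exact this.continuous
    have h1 : Filter.Tendsto (fun n => h (q n u)) ↑U (nhds (h (ρ u))) :=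
      (hcont.tendsto (ρ u)).comp (hρt u hu)
    have h2 : ∀ᶠ n : ℕ in Filter.atTop, h (q n u) = u := by
      filter_upwards [hsp_ev u hu] with n e
      have hmem := hsp_mem n u hu
      have := haff (σ n) (hσg n) (sp n u) hmem
      rw [hσ0, hσ1, hhδ] at this
      simp only [smul_eq_mul] at this
      rw [hq]
      simp only
      rw [this, e]
      field_simp
      ring
    have h2' : (fun n => h (q n u)) =ᶠ[↑U] (fun _ => u) := hU h2
    have h3 : Filter.Tendsto (fun n => h (q n u)) ↑U (nhds u) :=
      Filter.Tendsto.congr' h2'.symm tendsto_const_nhds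
    exact tendsto_nhds_unique h1 h3

/-- Line construction: through each point a full line compatible with `g`. -/
private lemma exists_line {X : Type*} [MetricSpace X] [ProperSpace X]
    (hgeo : GeodesicSpace X)
    (g : X → ℝ) (hlip : ∀ a b : X, |g a - g b| ≤ dist a b) (haff : AffineOn g)
    (δ : ℝ → X) (hδd : ∀ s t : ℝ, dist (δ s) (δ t) = |s - t|) (hgδ : ∀ t : ℝ, g (δ t) = t)
    (x : X) :
    ∃ ℓ : ℝ → X, ℓ (g x) = x ∧ (∀ u v : ℝ, dist (ℓ u) (ℓ v) = |u - v|) ∧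
      (∀ u : ℝ, g (ℓ u) = u) := by
  obtain ⟨ρp, hp0, hpd, hpg⟩ := exists_ray hgeo g hlip haff δ hδd hgδ x
  have hnlip : ∀ a b : X, |(fun y => -g y) a - (fun y => -g y) b| ≤ dist a b := by
    intro a b
    simp only
    rw [show -g a - -g b = -(g a - g b) from by ring, abs_neg]
    exact hlip a b
  have hnaff : AffineOn (fun y => -g y) := by
    intro σ hσ t ht
    have := haff σ hσ t ht
    simp only [smul_eq_mul] at this ⊢
    rw [this]; ring
  have hδd' : ∀ s t : ℝ, dist (δ (-s)) (δ (-t)) = |s - t| := by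
    intro s t
    rw [hδd, show -s - -t = -(s - t) from by ring, abs_neg]
  have hgδ' : ∀ t : ℝ, (fun y => -g y) (δ (-t)) = t := by
    intro t; simp [hgδ]
  obtain ⟨ρm, hm0, hmd, hmg⟩ :=
    exists_ray hgeo (fun y => -g y) hnlip hnaff (fun t => δ (-t)) hδd' hgδ' x
  have hcross : ∀ u v : ℝ, g x ≤ u → v < g x → dist (ρp u) (ρm (-v)) = u - v := by
    intro u v hu hv
    have hvm : -g x ≤ -v := by linarith
    have e1 : dist (ρp u) x = u - g x := by
      have h1 := hpd u (g x) hu le_rfl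
      rw [hp0] at h1
      rw [h1, abs_of_nonneg (by linarith)]
    have e2 : dist x (ρm (-v)) = g x - v := by
      have h1 := hmd (-g x) (-v) le_rfl hvm
      rw [hm0] at h1
      rw [h1, show -g x - -v = -(g x - v) from by ring, abs_neg,
        abs_of_nonneg (by linarith)]
    have hub : dist (ρp u) (ρm (-v)) ≤ u - v := by
      calc dist (ρp u) (ρm (-v)) ≤ dist (ρp u) x + dist x (ρm (-v)) := dist_triangle _ _ _
        _ = u - v := by rw [e1, e2]; ring
    have hlb : u - v ≤ dist (ρp u) (ρm (-v)) := by
      have h1 : g (ρp u) = u := hpg u hu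
      have h2 : -g (ρm (-v)) = -v := hmg (-v) hvm
      have h3 := hlip (ρp u) (ρm (-v))
      rw [h1, show g (ρm (-v)) = v from by linarith] at h3
      calc u - v ≤ |u - v| := le_abs_self _
        _ ≤ _ := h3
    linarith
  refine ⟨fun u => if g x ≤ u then ρp u else ρm (-u), ?_, ?_, ?_⟩
  · show (if g x ≤ g x then ρp (g x) else ρm (-(g x))) = x
    rw [if_pos le_rfl]; exact hp0
  · intro u v
    show dist (if g x ≤ u then ρp u else ρm (-u)) (if g x ≤ v then ρp v else ρm (-v)) = |u - v|
    by_cases hu : g x ≤ u <;> by_cases hv : g x ≤ v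
    · rw [if_pos hu, if_pos hv]; exact hpd u v hu hv
    · have hv' := lt_of_not_ge hv
      rw [if_pos hu, if_neg hv, hcross u v hu hv', abs_of_nonneg (by linarith)]
    · have hu' := lt_of_not_ge hu
      rw [if_neg hu, if_pos hv, dist_comm, hcross v u hv hu', abs_sub_comm,
        abs_of_nonneg (by linarith)]
    · have hu' := lt_of_not_ge hu
      have hv' := lt_of_not_ge hv
      rw [if_neg hu, if_neg hv, hmd (-u) (-v) (by linarith) (by linarith),
        show -u - -v = -(u - v) from by ring, abs_neg]
  · intro u
    show g (if g x ≤ u then ρp u else ρm (-u)) = u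
    by_cases hu : g x ≤ u
    · rw [if_pos hu]; exact hpg u hu
    · have hu' := lt_of_not_ge hu
      rw [if_neg hu]
      have h2 := hmg (-u) (by linarith)
      linarith

private lemma withlp_dist {Z : Type*} [MetricSpace Z] (z1 z2 : Z) (t1 t2 : ℝ) :
    dist ((WithLp.equiv 2 (Z × ℝ)).symm (z1, t1)) ((WithLp.equiv 2 (Z × ℝ)).symm (z2, t2)) =
      Real.sqrt (dist z1 z2 ^ 2 + (t1 - t2) ^ 2) := by
  rw [WithLp.prod_dist_eq_add (by norm_num : 0 < (2:ENNReal).toReal)]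
  have h2 : ((2:ENNReal)).toReal = 2 := by norm_num
  rw [h2, Real.sqrt_eq_rpow]
  congr 1
  have e1 : ((WithLp.equiv 2 (Z × ℝ)).symm (z1, t1)).fst = z1 := rfl
  have e2 : ((WithLp.equiv 2 (Z × ℝ)).symm (z2, t2)).fst = z2 := rfl
  have e3 : ((WithLp.equiv 2 (Z × ℝ)).symm (z1, t1)).snd = t1 := rfl
  have e4 : ((WithLp.equiv 2 (Z × ℝ)).symm (z2, t2)).snd = t2 := rfl
  rw [e1, e2, e3, e4, Real.dist_eq]
  rw [show (2:ℝ) = ((2:ℕ):ℝ) from by norm_num, Real.rpow_natCast, Real.rpow_natCast]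
  rw [sq_abs]

/-- Splitting off a line: if a Lipschitz affine function on a nonnegatively
curved Alexandrov space attains its optimal Lipschitz constant `L > 0` along a line, then the
space splits as an `ℓ²`-product `Z ×₂ ℝ` and `f` is `L` times the second coordinate. -/
/- MAIN THEOREM (to be appended after defs and private lemmas) -/
theorem line_splitting (n : ℕ) (X : Type*) [MetricSpace X] (hX : IsAlexandrov n 0 X)
    (f : X → ℝ) (hlip : IsLip f) (haff : AffineOn f)
    (L : ℝ) (hL : L = lipConst f) (hLpos : 0 < L)
    (γ : ℝ → X) (hγ : Isometry γ) (hfγ : ∀ t : ℝ, f (γ t) = f (γ 0) + L * t) :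
    ∃ (Z : Type) (_ : MetricSpace Z) (Φ : X → WithLp 2 (Z × ℝ)),
      Isometry Φ ∧ Function.Surjective Φ ∧
      ∀ x : X, f x = L * ((WithLp.equiv 2 (Z × ℝ)) (Φ x)).2 := by
  obtain ⟨hcomp, hprop, hgeo, hdim, hcurv⟩ := hX
  haveI := hcomp
  haveI := hprop
  -- `L` is a Lipschitz constant for `f`
  have hfL : ∀ x y : X, |f x - f y| ≤ L * dist x y := by
    intro x y
    rcases eq_or_ne x y with rfl | hxy
    · simp
    · have hd : 0 < dist x y := dist_pos.2 hxy
      have hlb : |f x - f y| / dist x y ≤ L := by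
        rw [hL]
        refine le_csInf hlip ?_
        rintro b ⟨hb0, hb⟩
        rw [div_le_iff₀ hd]
        exact hb x y
      have h2 := mul_le_mul_of_nonneg_right hlb hd.le
      rwa [div_mul_cancel₀ _ (ne_of_gt hd)] at h2
  -- the normalized function g = f / L
  set g : X → ℝ := fun x => f x / L with hgdef
  have hglip : ∀ x y : X, |g x - g y| ≤ dist x y := by
    intro x y
    simp only [hgdef]
    rw [div_sub_div_same, abs_div, abs_of_pos hLpos, div_le_iff₀ hLpos]
    calc |f x - f y| ≤ L * dist x y := hfL x y
      _ = dist x y * L := by ring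
  have hgaff : AffineOn g := by
    intro σ hσ t ht
    have h2 := haff σ hσ t ht
    simp only [hgdef, smul_eq_mul] at h2 ⊢
    rw [h2]; ring
  -- the reference line, normalized so that g ∘ δ = id
  set δ : ℝ → X := fun t => γ (t - f (γ 0) / L) with hδdef
  have hδd : ∀ s t : ℝ, dist (δ s) (δ t) = |s - t| := by
    intro s t
    simp only [hδdef]
    rw [hγ.dist_eq, Real.dist_eq]
    congr 1; ring
  have hgδ : ∀ t : ℝ, g (δ t) = t := by
    intro t
    simp only [hgdef, hδdef]
    rw [hfγ]
    field_simp
    ring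
  -- lines through every point
  choose ℓ hℓ0 hℓd hℓg using fun x => exists_line hgeo g hglip hgaff δ hδd hgδ x
  -- key identity: distance to a line is pythagorean
  have hkey : ∀ (x z : X) (s : ℝ),
      dist z (ℓ x s) ^ 2 = dist z (ℓ x (g z)) ^ 2 + (s - g z) ^ 2 := by
    intro x z s
    set G : ℝ → ℝ := fun s => dist z (ℓ x s) ^ 2 - (s - g z) ^ 2 with hGdef
    have h0 : ∀ s, 0 ≤ G s := by
      intro s
      show 0 ≤ dist z (ℓ x s) ^ 2 - (s - g z) ^ 2
      have h1 : |g z - s| ≤ dist z (ℓ x s) := by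
        have h2 := hglip z (ℓ x s)
        rwa [hℓg x s] at h2
      have h2 : (s - g z) ^ 2 ≤ dist z (ℓ x s) ^ 2 := by
        have e : (s - g z) ^ 2 = |g z - s| ^ 2 := by
          rw [← abs_neg, show -(g z - s) = s - g z from by ring, sq_abs]
        rw [e]
        exact pow_le_pow_left₀ (abs_nonneg _) h1 2
      linarith
    have h1 : ∀ s a : ℝ, G (s + a) + G (s - a) ≤ 2 * G s := by
      have hcmp : ∀ (s a : ℝ), 0 < a →
          dist z (ℓ x (s + a)) ^ 2 + dist z (ℓ x (s - a)) ^ 2 ≤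
            2 * dist z (ℓ x s) ^ 2 + 2 * a ^ 2 := by
        intro s a ha
        have hd1 : dist (ℓ x s) (ℓ x (s - a)) = a := by
          rw [hℓd, show s - (s - a) = a from by ring, abs_of_pos ha]
        have hd2 : dist (ℓ x s) (ℓ x (s + a)) = a := by
          rw [hℓd, show s - (s + a) = -a from by ring, abs_neg, abs_of_pos ha]
        have hd3 : dist (ℓ x (s - a)) (ℓ x (s + a)) = 2 * a := by
          rw [hℓd, show s - a - (s + a) = -(2 * a) from by ring, abs_neg,
            abs_of_pos (by linarith)]
        exact cmp_midpoint hcurv (ℓ x s) (ℓ x (s - a)) (ℓ x (s + a)) z a ha hd1 hd2 hd3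
      intro s a
      rcases lt_trichotomy a 0 with hneg | rfl | hpos
      · have h3 := hcmp s (-a) (by linarith)
        rw [show s + -a = s - a from by ring, show s - -a = s + a from by ring] at h3
        show (dist z (ℓ x (s + a)) ^ 2 - (s + a - g z) ^ 2) +
          (dist z (ℓ x (s - a)) ^ 2 - (s - a - g z) ^ 2) ≤
            2 * (dist z (ℓ x s) ^ 2 - (s - g z) ^ 2)
        nlinarith [h3]
      · simp only [add_zero, sub_zero]
        linarith
      · have h3 := hcmp s a hpos
        show (dist z (ℓ x (s + a)) ^ 2 - (s + a - g z) ^ 2) +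
          (dist z (ℓ x (s - a)) ^ 2 - (s - a - g z) ^ 2) ≤
            2 * (dist z (ℓ x s) ^ 2 - (s - g z) ^ 2)
        nlinarith [h3]
    have hconst : dist z (ℓ x s) ^ 2 - (s - g z) ^ 2 =
        dist z (ℓ x (g z)) ^ 2 - (g z - g z) ^ 2 :=
      const_of_midpoint_concave G h1 h0 s (g z)
    rw [sub_self] at hconst
    have h02 : (0:ℝ) ^ 2 = 0 := by norm_num
    linarith
  -- flat strip between any two of the constructed lines
  have e1 : ∀ (x y : X) (s t : ℝ),
      dist (ℓ y t) (ℓ x s) ^ 2 = dist (ℓ y t) (ℓ x t) ^ 2 + (s - t) ^ 2 := by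
    intro x y s t
    have h2 := hkey x (ℓ y t) s
    rwa [hℓg y t] at h2
  have hstrip : ∀ (x y : X) (s t : ℝ),
      dist (ℓ x s) (ℓ y t) ^ 2 = dist (ℓ x 0) (ℓ y 0) ^ 2 + (s - t) ^ 2 := by
    intro x y s t
    have hdiag : ∀ s' : ℝ, dist (ℓ x s') (ℓ y s') ^ 2 = dist (ℓ x 0) (ℓ y 0) ^ 2 := by
      intro s'
      have h1 := e1 x y s' 0
      have h2 := e1 y x 0 s'
      rw [dist_comm (ℓ y 0) (ℓ x s')] at h1
      rw [dist_comm (ℓ y 0) (ℓ x 0)] at h1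
      have e : (s' - (0:ℝ)) ^ 2 = (0 - s') ^ 2 := by ring
      linarith
    have h2 := e1 y x t s
    have h3 := hdiag s
    have e : (t - s) ^ 2 = (s - t) ^ 2 := by ring
    linarith
  -- global pythagorean distance formula
  have hdistf : ∀ x y : X, dist x y ^ 2 = dist (ℓ x 0) (ℓ y 0) ^ 2 + (g x - g y) ^ 2 := by
    intro x y
    have h2 := hstrip x y (g x) (g y)
    rwa [hℓ0 x, hℓ0 y] at h2
  -- projections of points on a common line agree
  have hproj : ∀ (x : X) (t : ℝ), ℓ (ℓ x t) 0 = ℓ x 0 := by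
    intro x t
    have hgy : g (ℓ x t) = t := hℓg x t
    have hy0 : ℓ (ℓ x t) t = ℓ x t := by
      have h2 := hℓ0 (ℓ x t)
      rwa [hgy] at h2
    have h2 := hstrip (ℓ x t) x t t
    rw [hy0, dist_self] at h2
    have h0 : dist (ℓ (ℓ x t) 0) (ℓ x 0) ^ 2 = 0 := by nlinarith [h2]
    exact dist_eq_zero.1 ((pow_eq_zero_iff (two_ne_zero)).1 h0)
  -- Kuratowski embedding to fix the universe of the fiber
  haveI : SecondCountableTopology X := secondCountable_of_proper
  set e : X → lp (fun _ : ℕ => ℝ) ⊤ := kuratowskiEmbedding X with hedef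
  have he : Isometry e := kuratowskiEmbedding.isometry X
  set Zs : Set (lp (fun _ : ℕ => ℝ) ⊤) := Set.range (fun x : X => e (ℓ x 0)) with hZdef
  set Φ : X → WithLp 2 (↥Zs × ℝ) :=
    fun x => (WithLp.equiv 2 (↥Zs × ℝ)).symm (⟨e (ℓ x 0), ⟨x, rfl⟩⟩, g x) with hΦdef
  refine ⟨↥Zs, inferInstance, Φ, ?_, ?_, ?_⟩
  · -- isometry
    apply Isometry.of_dist_eq
    intro a b
    simp only [hΦdef]
    rw [withlp_dist]
    have hz : dist (⟨e (ℓ a 0), ⟨a, rfl⟩⟩ : ↥Zs) (⟨e (ℓ b 0), ⟨b, rfl⟩⟩ : ↥Zs) =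
        dist (ℓ a 0) (ℓ b 0) := by
      rw [Subtype.dist_eq]
      exact he.dist_eq _ _
    rw [hz]
    rw [show dist a b = Real.sqrt (dist a b ^ 2) from (Real.sqrt_sq dist_nonneg).symm]
    congr 1
    exact (hdistf a b).symm
  · -- surjectivity
    intro w
    obtain ⟨x, hx⟩ := ((WithLp.equiv 2 (↥Zs × ℝ)) w).1.2
    refine ⟨ℓ x ((WithLp.equiv 2 (↥Zs × ℝ)) w).2, ?_⟩
    simp only [hΦdef]
    rw [Equiv.symm_apply_eq]
    refine Prod.ext ?_ ?_
    · apply Subtype.ext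
      show e (ℓ (ℓ x ((WithLp.equiv 2 (↥Zs × ℝ)) w).2) 0) = _
      rw [hproj]
      exact hx
    · exact hℓg x _
  · -- the second coordinate recovers f
    intro x
    simp only [hΦdef]
    rw [Equiv.apply_symm_apply]
    show f x = L * (f x / L)
    field_simp
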